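/- Let A and B be disjoint sets with |A| = |B| = n, and let π be a partial order on A ∪ B oriented from A to B (every strict relation a ≺_π b has a ∈ A, b ∈ B). Construct the graph G on vertices A ∪ B ∪ X ∪ Y ∪ Z (with |X| = |Y| = |Z| = n) whose edges are all pairs inside each of the three cliques A ∪ X ∪ Z, A ∪ B ∪ Z, and B ∪ Y ∪ Z, and define π' as the reflexive-transitive closure of: x_1 ≺ v for all other vertices v; x_1 ≺ y_1 ≺ z_1 ≺ x_2 ≺ y_2 ≺ z_2 ≺ ... ≺ x_n ≺ y_n ≺ z_n; and a_i ≺ b_j whenever (a_i, b_j) ∈ π. Then G has a π'-extending Hamiltonian path if and only if π has an alternating linear extension. -/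

import Mathlib

/-- The vertex set `A ∪ B ∪ X ∪ Y ∪ Z` of the construction, each part of size `n`. -/
inductive Vtx (n : ℕ) where
  | a (i : Fin n)
  | b (i : Fin n)
  | x (i : Fin n)
  | y (i : Fin n)
  | z (i : Fin n)
deriving DecidableEq

namespace Vtx

variable {n : ℕ}

/-- Membership in the clique `A ∪ X ∪ Z`. -/
def inC1 : Vtx n → Prop
  | .a _ => True | .x _ => True | .z _ => True | _ => False

/-- Membership in the clique `A ∪ B ∪ Z`. -/
def inC2 : Vtx n → Prop
  | .a _ => True | .b _ => True | .z _ => True | _ => False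

/-- Membership in the clique `B ∪ Y ∪ Z`. -/
def inC3 : Vtx n → Prop
  | .b _ => True | .y _ => True | .z _ => True | _ => False

end Vtx

/-- The graph whose edges are all pairs inside each of the cliques
`A ∪ X ∪ Z`, `A ∪ B ∪ Z` and `B ∪ Y ∪ Z`. -/
def cliqueCoverGraph (n : ℕ) : SimpleGraph (Vtx n) :=
  SimpleGraph.fromRel fun u v =>
    (u.inC1 ∧ v.inC1) ∨ (u.inC2 ∧ v.inC2) ∨ (u.inC3 ∧ v.inC3)

/-- The basic constraints of the order `π'`: `x₁ ≺ v` for all `v`;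
`x₁ ≺ y₁ ≺ z₁ ≺ x₂ ≺ y₂ ≺ z₂ ≺ ⋯ ≺ xₙ ≺ yₙ ≺ zₙ`; and `aᵢ ≺ bⱼ` whenever `R i j`. -/
def baseRel {n : ℕ} [NeZero n] (R : Fin n → Fin n → Prop) : Vtx n → Vtx n → Prop :=
  fun u v =>
    (u = Vtx.x (0 : Fin n)) ∨
    (∃ i, u = Vtx.x i ∧ v = Vtx.y i) ∨
    (∃ i, u = Vtx.y i ∧ v = Vtx.z i) ∨
    (∃ i j : Fin n, u = Vtx.z i ∧ v = Vtx.x j ∧ (j : ℕ) = (i : ℕ) + 1) ∨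
    (∃ i j : Fin n, u = Vtx.a i ∧ v = Vtx.b j ∧ R i j)

/-- The order `π'`: the reflexive-transitive closure of the basic constraints. -/
def piPrime {n : ℕ} [NeZero n] (R : Fin n → Fin n → Prop) : Vtx n → Vtx n → Prop :=
  Relation.ReflTransGen (baseRel R)

/-- `l` is a linear extension of the partial order `r`. -/
def IsLinearExtensionList {V : Type*} (r : V → V → Prop) (l : List V) : Prop :=
  l.Nodup ∧ (∀ v : V, v ∈ l) ∧
    ∀ (i j : ℕ) (hi : i < l.length) (hj : j < l.length), r l[i] l[j] → i ≤ j

/-- `l` is an `r`-extending Hamiltonian path of `G`. -/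
def IsExtendingHamPath {V : Type*} (G : SimpleGraph V) (r : V → V → Prop)
    (l : List V) : Prop :=
  IsLinearExtensionList r l ∧ l.Chain' G.Adj

/-- `l` is an alternating linear extension of the partial order on `A ∪ B`
(with `A = Sum.inl`, `B = Sum.inr`) oriented from `A` to `B` given by `R`:
a linear extension whose entries at odd (1-based) positions are exactly those of `A`. -/
def IsAltLinExt {n : ℕ} (R : Fin n → Fin n → Prop)
    (l : List (Fin n ⊕ Fin n)) : Prop :=
  l.Nodup ∧ (∀ v : Fin n ⊕ Fin n, v ∈ l) ∧
    (∀ (i j : ℕ) (hi : i < l.length) (hj : j < l.length) (a b : Fin n),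
      l[i] = Sum.inl a → l[j] = Sum.inr b → R a b → i ≤ j) ∧
    (∀ (i : ℕ) (hi : i < l.length), (∃ a : Fin n, l[i] = Sum.inl a) ↔ Even i)

set_option linter.unusedSectionVars false

namespace ExtHamAux
open Vtx

variable {n : ℕ} [NeZero n] {R : Fin n → Fin n → Prop}

/-! ### Counting the vertices -/

def vtxEquiv (n : ℕ) : Vtx n ≃ Fin n × Fin 5 where
  toFun v := match v with
    | .a i => (i, 0) | .b i => (i, 1) | .x i => (i, 2) | .y i => (i, 3) | .z i => (i, 4)
  invFun p := match p with
    | (i, ⟨0, _⟩) => .a i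
    | (i, ⟨1, _⟩) => .b i
    | (i, ⟨2, _⟩) => .x i
    | (i, ⟨3, _⟩) => .y i
    | (i, ⟨4, _⟩) => .z i
  left_inv v := by cases v <;> rfl
  right_inv p := by
    obtain ⟨i, j⟩ := p
    match j with
    | ⟨0, _⟩ => rfl
    | ⟨1, _⟩ => rfl
    | ⟨2, _⟩ => rfl
    | ⟨3, _⟩ => rfl
    | ⟨4, _⟩ => rfl

instance : Fintype (Vtx n) := Fintype.ofEquiv _ (vtxEquiv n).symm

lemma card_vtx : Fintype.card (Vtx n) = 5 * n := by
  rw [Fintype.card_congr (vtxEquiv n), Fintype.card_prod, Fintype.card_fin, Fintype.card_fin,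
    mul_comm]

/-! ### Adjacency lemmas -/

lemma adj_xa (i j : Fin n) : (cliqueCoverGraph n).Adj (.x i) (.a j) := by
  simp [cliqueCoverGraph, SimpleGraph.fromRel_adj, Vtx.inC1, Vtx.inC2, Vtx.inC3]

lemma adj_ab (i j : Fin n) : (cliqueCoverGraph n).Adj (.a i) (.b j) := by
  simp [cliqueCoverGraph, SimpleGraph.fromRel_adj, Vtx.inC1, Vtx.inC2, Vtx.inC3]

lemma adj_by (i j : Fin n) : (cliqueCoverGraph n).Adj (.b i) (.y j) := by
  simp [cliqueCoverGraph, SimpleGraph.fromRel_adj, Vtx.inC1, Vtx.inC2, Vtx.inC3]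

lemma adj_yz (i j : Fin n) : (cliqueCoverGraph n).Adj (.y i) (.z j) := by
  simp [cliqueCoverGraph, SimpleGraph.fromRel_adj, Vtx.inC1, Vtx.inC2, Vtx.inC3]

lemma adj_zx (i j : Fin n) : (cliqueCoverGraph n).Adj (.z i) (.x j) := by
  simp [cliqueCoverGraph, SimpleGraph.fromRel_adj, Vtx.inC1, Vtx.inC2, Vtx.inC3]

lemma nadj_xy (i j : Fin n) : ¬ (cliqueCoverGraph n).Adj (.x i) (.y j) := by
  simp [cliqueCoverGraph, SimpleGraph.fromRel_adj, Vtx.inC1, Vtx.inC2, Vtx.inC3]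

lemma nadj_xb (i j : Fin n) : ¬ (cliqueCoverGraph n).Adj (.x i) (.b j) := by
  simp [cliqueCoverGraph, SimpleGraph.fromRel_adj, Vtx.inC1, Vtx.inC2, Vtx.inC3]

lemma nadj_ay (i j : Fin n) : ¬ (cliqueCoverGraph n).Adj (.a i) (.y j) := by
  simp [cliqueCoverGraph, SimpleGraph.fromRel_adj, Vtx.inC1, Vtx.inC2, Vtx.inC3]

/-! ### `piPrime` lemmas -/

lemma pp_x0 (v : Vtx n) : piPrime R (.x 0) v :=
  Relation.ReflTransGen.single (Or.inl rfl)

lemma pp_xy (i : Fin n) : piPrime R (.x i) (.y i) :=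
  Relation.ReflTransGen.single (Or.inr (Or.inl ⟨i, rfl, rfl⟩))

lemma pp_yz (i : Fin n) : piPrime R (.y i) (.z i) :=
  Relation.ReflTransGen.single (Or.inr (Or.inr (Or.inl ⟨i, rfl, rfl⟩)))

lemma pp_zx1 {i j : Fin n} (h : (j : ℕ) = (i : ℕ) + 1) : piPrime R (.z i) (.x j) :=
  Relation.ReflTransGen.single (Or.inr (Or.inr (Or.inr (Or.inl ⟨i, j, rfl, rfl, h⟩))))

lemma pp_ab {i j : Fin n} (h : R i j) : piPrime R (.a i) (.b j) :=
  Relation.ReflTransGen.single (Or.inr (Or.inr (Or.inr (Or.inr ⟨i, j, rfl, rfl, h⟩))))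

lemma pp_xx_aux (d : ℕ) : ∀ (i j : Fin n), (j : ℕ) = (i : ℕ) + d → piPrime R (.x i) (.x j) := by
  induction d with
  | zero =>
    intro i j hd
    have : i = j := Fin.ext (by omega)
    subst this; exact Relation.ReflTransGen.refl
  | succ d ih =>
    intro i j hd
    have hlt : (i : ℕ) + d < n := by have := j.isLt; omega
    have h1 := ih i ⟨(i : ℕ) + d, hlt⟩ rfl
    exact h1.trans ((pp_xy _).trans ((pp_yz _).trans (pp_zx1 (by simp; omega))))

lemma pp_xx {i j : Fin n} (h : (i : ℕ) ≤ (j : ℕ)) : piPrime R (.x i) (.x j) :=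
  pp_xx_aux ((j : ℕ) - i) i j (by omega)

lemma pp_yx {i j : Fin n} (h : (i : ℕ) < (j : ℕ)) : piPrime R (.y i) (.x j) := by
  have hlt : (i : ℕ) + 1 < n := by have := j.isLt; omega
  exact (pp_yz i).trans ((pp_zx1 (j := ⟨(i : ℕ) + 1, hlt⟩) (by simp)).trans
    (pp_xx (by simp; omega)))

lemma pp_zx {i j : Fin n} (h : (i : ℕ) < (j : ℕ)) : piPrime R (.z i) (.x j) := by
  have hlt : (i : ℕ) + 1 < n := by have := j.isLt; omega
  exact (pp_zx1 (j := ⟨(i : ℕ) + 1, hlt⟩) (by simp)).trans (pp_xx (by simp; omega))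

lemma pp_yy {i j : Fin n} (h : (i : ℕ) ≤ (j : ℕ)) : piPrime R (.y i) (.y j) := by
  rcases eq_or_lt_of_le h with h' | h'
  · have : i = j := Fin.ext h'
    subst this; exact Relation.ReflTransGen.refl
  · exact (pp_yx h').trans (pp_xy j)

lemma pp_yzle {i j : Fin n} (h : (i : ℕ) ≤ (j : ℕ)) : piPrime R (.y i) (.z j) :=
  (pp_yy h).trans (pp_yz j)

end ExtHamAux
namespace ExtHamAux
open Vtx

variable {n : ℕ} [NeZero n] {R : Fin n → Fin n → Prop}

/-- The Hamiltonian path built from `σ, τ : Fin n → Fin n`: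
`x₀ a_{σ0} b_{τ0} y₀ z₀ x₁ ⋯`. -/
def buildFun (σ τ : Fin n → Fin n) (k : Fin (5 * n)) : Vtx n :=
  have hb : (k : ℕ) / 5 < n := by have := k.isLt; omega
  if (k : ℕ) % 5 = 0 then .x ⟨(k : ℕ) / 5, hb⟩
  else if (k : ℕ) % 5 = 1 then .a (σ ⟨(k : ℕ) / 5, hb⟩)
  else if (k : ℕ) % 5 = 2 then .b (τ ⟨(k : ℕ) / 5, hb⟩)
  else if (k : ℕ) % 5 = 3 then .y ⟨(k : ℕ) / 5, hb⟩
  else .z ⟨(k : ℕ) / 5, hb⟩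

/-- The "intended position" of each vertex, given inverses of `σ` and `τ`. -/
def rho (σi τi : Fin n → Fin n) : Vtx n → ℕ
  | .x i => 5 * (i : ℕ)
  | .a i => 5 * (σi i : ℕ) + 1
  | .b i => 5 * (τi i : ℕ) + 2
  | .y i => 5 * (i : ℕ) + 3
  | .z i => 5 * (i : ℕ) + 4

lemma rho_buildFun (σ τ σi τi : Fin n → Fin n) (hσ : ∀ i, σi (σ i) = i)
    (hτ : ∀ i, τi (τ i) = i) (k : Fin (5 * n)) :
    rho σi τi (buildFun σ τ k) = (k : ℕ) := by
  simp only [buildFun]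
  split_ifs <;> simp only [rho, hσ, hτ, Fin.val_mk] <;> omega

lemma adj_buildFun (σ τ : Fin n → Fin n) (k k' : Fin (5 * n)) (h : (k' : ℕ) = (k : ℕ) + 1) :
    (cliqueCoverGraph n).Adj (buildFun σ τ k) (buildFun σ τ k') := by
  simp only [buildFun]
  split_ifs <;>
    first
      | exact adj_xa _ _ | exact adj_ab _ _ | exact adj_by _ _ | exact adj_yz _ _
      | exact adj_zx _ _ | omega

theorem easy_dir (l' : List (Fin n ⊕ Fin n)) (h : IsAltLinExt R l') :
    ∃ l : List (Vtx n), IsExtendingHamPath (cliqueCoverGraph n) (piPrime R) l := by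
  classical
  obtain ⟨hnd, hcm, hord, halt⟩ := h
  have hlen : l'.length = 2 * n := by
    have h1 : l'.toFinset = Finset.univ :=
      Finset.eq_univ_iff_forall.2 fun v => List.mem_toFinset.2 (hcm v)
    have h2 := List.toFinset_card_of_nodup hnd
    rw [h1, Finset.card_univ, Fintype.card_sum, Fintype.card_fin] at h2
    omega
  have npos := Nat.pos_of_ne_zero (NeZero.ne n)
  -- define σ and τ
  have hσex : ∀ i : Fin n, ∃ aa : Fin n,
      l'[2 * (i : ℕ)]'(by have := i.isLt; omega) = Sum.inl aa :=
    fun i => (halt _ _).2 ⟨(i : ℕ), two_mul _⟩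
  choose σ hσ using hσex
  have hτex : ∀ i : Fin n, ∃ bb : Fin n,
      l'[2 * (i : ℕ) + 1]'(by have := i.isLt; omega) = Sum.inr bb := by
    intro i
    have hb : 2 * (i : ℕ) + 1 < l'.length := by have := i.isLt; omega
    match hv : l'[2 * (i : ℕ) + 1]'hb with
    | Sum.inl aa =>
      exact absurd ((halt _ hb).1 ⟨aa, hv⟩) (by rw [Nat.even_iff]; omega)
    | Sum.inr bb => exact ⟨bb, rfl⟩
  choose τ hτ using hτex
  -- injectivity and inverses
  have hσinj : Function.Injective σ := by
    intro i i' he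
    have h1 := hσ i
    rw [he] at h1
    have h2 := h1.trans (hσ i').symm
    have h3 := (List.Nodup.getElem_inj_iff hnd).1 h2
    exact Fin.ext (by omega)
  have hτinj : Function.Injective τ := by
    intro i i' he
    have h1 := hτ i
    rw [he] at h1
    have h2 := h1.trans (hτ i').symm
    have h3 := (List.Nodup.getElem_inj_iff hnd).1 h2
    exact Fin.ext (by omega)
  choose σi hσi using Finite.surjective_of_injective hσinj
  choose τi hτi using Finite.surjective_of_injective hτinj
  have hσi2 : ∀ i, σi (σ i) = i := fun i => hσinj (hσi (σ i))
  have hτi2 : ∀ i, τi (τ i) = i := fun i => hτinj (hτi (τ i))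
  -- the built path is injective, hence bijective
  have hbinj : Function.Injective (buildFun σ τ) := by
    intro k k' he
    have h1 := rho_buildFun σ τ σi τi hσi2 hτi2 k
    have h2 := rho_buildFun σ τ σi τi hσi2 hτi2 k'
    rw [he] at h1
    exact Fin.ext (h1.symm.trans h2)
  have hbbij : Function.Bijective (buildFun σ τ) :=
    (Fintype.bijective_iff_injective_and_card _).2 ⟨hbinj, by
      rw [Fintype.card_fin, card_vtx]⟩
  refine ⟨List.ofFn (buildFun σ τ), ⟨⟨?_, ?_, ?_⟩, ?_⟩⟩
  · -- Nodup
    exact List.nodup_ofFn.2 hbinj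
  · -- complete
    intro v
    rw [List.mem_ofFn]
    exact hbbij.2 v
  · -- linear extension
    have hbase : ∀ u v : Vtx n, baseRel R u v → rho σi τi u ≤ rho σi τi v := by
      intro u v h
      rcases h with h | ⟨i, hu, hv⟩ | ⟨i, hu, hv⟩ | ⟨i, j, hu, hv, hij⟩ | ⟨i, j, hu, hv, hij⟩
      · subst h; simp [rho]
      · subst hu; subst hv; simp only [rho]; omega
      · subst hu; subst hv; simp only [rho]; omega
      · subst hu; subst hv; simp only [rho]; omega
      · subst hu; subst hv
        simp only [rho]
        have hord' := hord (2 * (σi i : ℕ)) (2 * (τi j : ℕ) + 1)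
          (by have := (σi i).isLt; omega) (by have := (τi j).isLt; omega) i j
        have hσv := hσ (σi i); rw [hσi i] at hσv
        have hτv := hτ (τi j); rw [hτi j] at hτv
        have := hord' hσv hτv hij
        omega
    have hmono : ∀ u v : Vtx n, piPrime R u v → rho σi τi u ≤ rho σi τi v := by
      intro u v h
      induction h with
      | refl => exact le_rfl
      | tail _ hstep ih => exact ih.trans (hbase _ _ hstep)
    intro i j hi hj hpp
    rw [List.length_ofFn] at hi hj
    rw [List.getElem_ofFn, List.getElem_ofFn] at hpp
    have h1 := rho_buildFun σ τ σi τi hσi2 hτi2 ⟨i, by omega⟩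
    have h2 := rho_buildFun σ τ σi τi hσi2 hτi2 ⟨j, by omega⟩
    have h3 := hmono _ _ hpp
    rw [h1, h2] at h3
    exact h3
  · -- chain
    rw [List.Chain', List.isChain_iff_getElem]
    intro k hk
    rw [List.length_ofFn] at hk
    simp only [List.get_eq_getElem, List.getElem_ofFn]
    exact adj_buildFun σ τ _ _ rfl

end ExtHamAux
namespace ExtHamAux
open Vtx

variable {n : ℕ} [NeZero n] {R : Fin n → Fin n → Prop}

/-- The alternating sequence `a_{σ0} b_{τ0} a_{σ1} b_{τ1} ⋯` -/
def altFun (σ τ : Fin n → Fin n) (k : Fin (2 * n)) : Fin n ⊕ Fin n :=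
  have hb : (k : ℕ) / 2 < n := by have := k.isLt; omega
  if (k : ℕ) % 2 = 0 then Sum.inl (σ ⟨(k : ℕ) / 2, hb⟩) else Sum.inr (τ ⟨(k : ℕ) / 2, hb⟩)

theorem hard_dir (l : List (Vtx n))
    (hh : IsExtendingHamPath (cliqueCoverGraph n) (piPrime R) l) :
    ∃ l' : List (Fin n ⊕ Fin n), IsAltLinExt R l' := by
  classical
  obtain ⟨⟨hnd, hcm, hord⟩, hch⟩ := hh
  have npos := Nat.pos_of_ne_zero (NeZero.ne n)
  have hlen : l.length = 5 * n := by
    have h1 : l.toFinset = Finset.univ :=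
      Finset.eq_univ_iff_forall.2 fun v => List.mem_toFinset.2 (hcm v)
    have h2 := List.toFinset_card_of_nodup hnd
    rw [h1, Finset.card_univ, card_vtx] at h2
    omega
  set pos : Vtx n → ℕ := fun v => l.idxOf v with hposdef
  have hposlt : ∀ v, pos v < l.length := fun v => List.idxOf_lt_length_iff.2 (hcm v)
  have hgetpos : ∀ v, l[pos v]'(hposlt v) = v := fun v => List.getElem_idxOf (hposlt v)
  have hposget : ∀ (k) (hk : k < l.length), pos (l[k]'hk) = k := fun k hk =>
    (List.Nodup.getElem_inj_iff hnd).1 (hgetpos (l[k]'hk))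
  have hposinj : ∀ u v : Vtx n, pos u = pos v → u = v := fun u v h =>
    ((hgetpos u).symm.trans (getElem_congr_idx h)).trans (hgetpos v)
  have hord' : ∀ u v : Vtx n, piPrime R u v → pos u ≤ pos v := fun u v h =>
    hord _ _ (hposlt u) (hposlt v) (by rw [hgetpos u, hgetpos v]; exact h)
  have hlt : ∀ u v : Vtx n, u ≠ v → piPrime R u v → pos u < pos v := by
    intro u v hne h
    rcases (hord' u v h).lt_or_eq with h' | h'
    · exact h'
    · exact absurd (hposinj u v h') hne
  have hadj : ∀ (k : ℕ) (hk1 : k + 1 < l.length),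
      (cliqueCoverGraph n).Adj (l[k]'(by omega)) (l[k+1]'hk1) := by
    intro k hk
    have := List.isChain_iff_getElem.1 hch k (by omega)
    simpa [List.get_eq_getElem] using this
  -- basic position facts
  have hP0 : pos (Vtx.x (0 : Fin n)) = 0 := by
    have h0 : 0 < l.length := by omega
    have h1 := hord' _ _ (pp_x0 (R := R) (l[0]'h0))
    rw [hposget 0 h0] at h1
    omega
  have hPQ : ∀ i : Fin n, pos (Vtx.x i) < pos (Vtx.y i) :=
    fun i => hlt _ _ (by simp) (pp_xy i)
  have hQZ : ∀ i : Fin n, pos (Vtx.y i) < pos (Vtx.z i) :=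
    fun i => hlt _ _ (by simp) (pp_yz i)
  -- the gap lemma: strictly between `x i` and `y i` everything is an `a` or a `b`
  have hAB : ∀ (i : Fin n) (k : ℕ) (hk : k < l.length),
      pos (Vtx.x i) < k → k < pos (Vtx.y i) →
      (∃ jj, l[k]'hk = Vtx.a jj) ∨ (∃ jj, l[k]'hk = Vtx.b jj) := by
    intro i k hk h1 h2
    have hkpos := hposget k hk
    match hv : l[k]'hk with
    | .a jj => exact Or.inl ⟨jj, rfl⟩
    | .b jj => exact Or.inr ⟨jj, rfl⟩
    | .x j =>
      exfalso
      rw [hv] at hkpos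
      rcases le_or_gt (j : ℕ) (i : ℕ) with hji | hij
      · have := hord' _ _ (pp_xx (R := R) hji); omega
      · have := hord' _ _ (pp_yx (R := R) hij); omega
    | .y j =>
      exfalso
      rw [hv] at hkpos
      rcases lt_or_ge (j : ℕ) (i : ℕ) with hji | hij
      · have := hord' _ _ (pp_yx (R := R) hji); omega
      · have := hord' _ _ (pp_yy (R := R) hij); omega
    | .z j =>
      exfalso
      rw [hv] at hkpos
      rcases lt_or_ge (j : ℕ) (i : ℕ) with hji | hij
      · have := hord' _ _ (pp_zx (R := R) hji); omega
      · have := hord' _ _ (pp_yzle (R := R) hij); omega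
  -- the key structural lemma
  have key1 : ∀ i : Fin n,
      (∃ jj, pos (Vtx.a jj) = pos (Vtx.x i) + 1) ∧
      (∃ jj, pos (Vtx.b jj) + 1 = pos (Vtx.y i)) ∧
      pos (Vtx.x i) + 3 ≤ pos (Vtx.y i) := by
    intro i
    have hPQi := hPQ i
    have hk1 : pos (Vtx.x i) + 1 < l.length := by have := hposlt (Vtx.y i); omega
    have hadj1 := hadj (pos (Vtx.x i)) hk1
    rw [hgetpos (Vtx.x i)] at hadj1
    -- the element after `x i` is not `y i`
    have hne1 : pos (Vtx.x i) + 1 ≠ pos (Vtx.y i) := by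
      intro he
      have hy : l[pos (Vtx.x i) + 1]'hk1 = Vtx.y i := (getElem_congr_idx he).trans (hgetpos _)
      rw [hy] at hadj1
      exact nadj_xy i i hadj1
    have hlt1 : pos (Vtx.x i) + 1 < pos (Vtx.y i) := by omega
    -- the element after `x i` is an `a`
    obtain ⟨jj, hjj⟩ : ∃ jj, l[pos (Vtx.x i) + 1]'hk1 = Vtx.a jj := by
      rcases hAB i _ hk1 (by omega) hlt1 with h | ⟨jj, hjj⟩
      · exact h
      · rw [hjj] at hadj1; exact absurd hadj1 (nadj_xb i jj)
    have hjjpos : pos (Vtx.a jj) = pos (Vtx.x i) + 1 := by rw [← hjj]; exact hposget _ hk1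
    -- the element before `y i`
    have hm1 : pos (Vtx.y i) - 1 + 1 < l.length := by have := hposlt (Vtx.y i); omega
    have hadj2 := hadj (pos (Vtx.y i) - 1) hm1
    have hy2 : l[pos (Vtx.y i) - 1 + 1]'hm1 = Vtx.y i :=
      (getElem_congr_idx (by omega)).trans (hgetpos (Vtx.y i))
    rw [hy2] at hadj2
    rcases Nat.lt_or_ge (pos (Vtx.x i) + 1) (pos (Vtx.y i) - 1) with hg | hg
    · -- the element before `y i` is strictly inside the gap, hence a `b`
      rcases hAB i (pos (Vtx.y i) - 1) (by omega) (by omega) (by omega) with ⟨kk, hkk⟩ | ⟨kk, hkk⟩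
      · rw [hkk] at hadj2
        exact absurd hadj2 (nadj_ay kk i)
      · refine ⟨⟨jj, hjjpos⟩, ⟨kk, ?_⟩, by omega⟩
        have : pos (Vtx.b kk) = pos (Vtx.y i) - 1 := by rw [← hkk]; exact hposget _ (by omega)
        omega
    · -- otherwise the element before `y i` is the `a` after `x i`: contradiction
      exfalso
      have hmx : pos (Vtx.y i) - 1 = pos (Vtx.x i) + 1 := by omega
      have : l[pos (Vtx.y i) - 1]'(by omega) = Vtx.a jj := (getElem_congr_idx hmx).trans hjj
      rw [this] at hadj2
      exact nadj_ay jj i hadj2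
  -- position arithmetic: the blocks are forced
  have hstep : ∀ (i j : Fin n), (j : ℕ) = (i : ℕ) + 1 → pos (Vtx.x i) + 5 ≤ pos (Vtx.x j) := by
    intro i j hij
    have h1 := (key1 i).2.2
    have h2 := hQZ i
    have h3 := hlt _ _ (by simp) (pp_zx1 (R := R) hij)
    omega
  have hchain : ∀ (d : ℕ) (i j : Fin n), (j : ℕ) = (i : ℕ) + d →
      pos (Vtx.x i) + 5 * d ≤ pos (Vtx.x j) := by
    intro d
    induction d with
    | zero =>
      intro i j h
      have : i = j := Fin.ext (by omega)
      subst this; omega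
    | succ d ih =>
      intro i j h
      have hd : (i : ℕ) + d < n := by have := j.isLt; omega
      have h1 := ih i ⟨(i : ℕ) + d, hd⟩ (by simp)
      have h2 := hstep ⟨(i : ℕ) + d, hd⟩ j (by simp only [Fin.val_mk]; omega)
      omega
  have hlb : ∀ i : Fin n, 5 * (i : ℕ) ≤ pos (Vtx.x i) := by
    intro i
    have h1 := hchain (i : ℕ) 0 i (by simp)
    rw [hP0] at h1
    omega
  have hn1 : n - 1 < n := by omega
  have hub : ∀ i : Fin n, pos (Vtx.x i) ≤ 5 * (i : ℕ) := by
    intro i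
    have hi := i.isLt
    have h1 := hchain ((n - 1) - (i : ℕ)) i ⟨n - 1, hn1⟩ (by simp only [Fin.val_mk]; omega)
    have h2 := (key1 ⟨n - 1, hn1⟩).2.2
    have h3 := hQZ ⟨n - 1, hn1⟩
    have h4 := hposlt (Vtx.z ⟨n - 1, hn1⟩)
    rw [hlen] at h4
    omega
  have hPx : ∀ i : Fin n, pos (Vtx.x i) = 5 * (i : ℕ) := fun i => le_antisymm (hub i) (hlb i)
  have hzub : ∀ i : Fin n, pos (Vtx.z i) ≤ 5 * (i : ℕ) + 4 := by
    intro i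
    rcases Nat.lt_or_ge ((i : ℕ) + 1) n with h | h
    · have h1 := hlt _ _ (by simp) (pp_zx1 (R := R) (i := i) (j := ⟨(i : ℕ) + 1, h⟩)
        (by simp))
      have h2 := hPx ⟨(i : ℕ) + 1, h⟩
      simp only [Fin.val_mk] at h2
      omega
    · have h4 := hposlt (Vtx.z i)
      rw [hlen] at h4
      have := i.isLt
      omega
  have hQy : ∀ i : Fin n, pos (Vtx.y i) = 5 * (i : ℕ) + 3 := by
    intro i
    have h1 := (key1 i).2.2
    have h2 := hQZ i
    have h3 := hzub i
    have h4 := hPx i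
    omega
  -- extract σ and τ
  choose σ hσ using fun i : Fin n => (key1 i).1
  choose τ hτ using fun i : Fin n => (key1 i).2.1
  have hσpos : ∀ i, pos (Vtx.a (σ i)) = 5 * (i : ℕ) + 1 := by
    intro i; have h1 := hσ i; have h2 := hPx i; omega
  have hτpos : ∀ i, pos (Vtx.b (τ i)) = 5 * (i : ℕ) + 2 := by
    intro i; have h1 := hτ i; have h2 := hQy i; omega
  have hσinj : Function.Injective σ := by
    intro i i' he
    have h1 := hσpos i
    rw [he] at h1
    have h2 := hσpos i'
    exact Fin.ext (by omega)
  have hτinj : Function.Injective τ := by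
    intro i i' he
    have h1 := hτpos i
    rw [he] at h1
    have h2 := hτpos i'
    exact Fin.ext (by omega)
  have hσsurj := Finite.surjective_of_injective hσinj
  have hτsurj := Finite.surjective_of_injective hτinj
  have hRle : ∀ (i j : Fin n), R (σ i) (τ j) → (i : ℕ) ≤ (j : ℕ) := by
    intro i j hR
    have h0 := hord' _ _ (pp_ab (R := R) hR)
    have h1 := hσpos i
    have h2 := hτpos j
    omega
  -- build the alternating list
  have haltinj : Function.Injective (altFun σ τ) := by
    intro k k' he
    simp only [altFun] at he
    rcases (by omega : (k : ℕ) % 2 = 0 ∨ (k : ℕ) % 2 = 1) with hp1 | hp1 <;>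
      rcases (by omega : (k' : ℕ) % 2 = 0 ∨ (k' : ℕ) % 2 = 1) with hp2 | hp2
    · rw [if_pos hp1, if_pos hp2] at he
      have h4 : (k : ℕ) / 2 = (k' : ℕ) / 2 := congrArg Fin.val (hσinj (Sum.inl.inj he))
      exact Fin.ext (by omega)
    · rw [if_pos hp1, if_neg (by omega)] at he
      exact absurd he (by simp)
    · rw [if_neg (by omega), if_pos hp2] at he
      exact absurd he (by simp)
    · rw [if_neg (by omega), if_neg (by omega)] at he
      have h4 : (k : ℕ) / 2 = (k' : ℕ) / 2 := congrArg Fin.val (hτinj (Sum.inr.inj he))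
      exact Fin.ext (by omega)
  have haltbij : Function.Bijective (altFun σ τ) :=
    (Fintype.bijective_iff_injective_and_card _).2 ⟨haltinj, by
      simp [Fintype.card_sum]; omega⟩
  refine ⟨List.ofFn (altFun σ τ), ⟨?_, ?_, ?_, ?_⟩⟩
  · exact List.nodup_ofFn.2 haltinj
  · intro v
    rw [List.mem_ofFn]
    exact haltbij.2 v
  · -- linear extension property
    intro i j hi hj aa bb h1 h2 hR
    rw [List.getElem_ofFn] at h1 h2
    have hi2 : i < 2 * n := by simpa using hi
    have hj2 : j < 2 * n := by simpa using hj
    simp only [altFun, Fin.val_mk] at h1 h2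
    rcases (by omega : i % 2 = 0 ∨ i % 2 = 1) with hp1 | hp1
    swap
    · rw [if_neg (by omega)] at h1
      exact absurd h1 (by simp)
    rw [if_pos hp1] at h1
    rcases (by omega : j % 2 = 0 ∨ j % 2 = 1) with hp2 | hp2
    · rw [if_pos hp2] at h2
      exact absurd h2 (by simp)
    rw [if_neg (by omega)] at h2
    have ha := Sum.inl.inj h1
    have hb := Sum.inr.inj h2
    have h5 := hRle _ _ (by rw [ha, hb]; exact hR)
    simp only [Fin.val_mk] at h5
    omega
  · -- alternation
    intro i hi
    rw [List.getElem_ofFn]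
    have hi2 : i < 2 * n := by simpa using hi
    simp only [altFun, Fin.val_mk]
    rcases (by omega : i % 2 = 0 ∨ i % 2 = 1) with hp | hp
    · rw [if_pos hp]
      constructor
      · intro _; exact Nat.even_iff.2 hp
      · intro _; exact ⟨_, rfl⟩
    · rw [if_neg (by omega)]
      constructor
      · rintro ⟨aa, ha⟩; exact absurd ha (by simp)
      · intro hev; exact absurd (Nat.even_iff.1 hev) (by omega)

end ExtHamAux
/-- The graph `G` built from the three cliques `A ∪ X ∪ Z`, `A ∪ B ∪ Z`, `B ∪ Y ∪ Z`,
together with the order `π'`, has a `π'`-extending Hamiltonian path if and only if the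
partial order `π` (oriented from `A` to `B`, given by `R`) has an alternating linear
extension. -/

theorem extHamPath_iff_altLinExt (n : ℕ) [NeZero n] (R : Fin n → Fin n → Prop) :
    (∃ l : List (Vtx n), IsExtendingHamPath (cliqueCoverGraph n) (piPrime R) l) ↔
      ∃ l : List (Fin n ⊕ Fin n), IsAltLinExt R l := by
  constructor
  · rintro ⟨l, hl⟩
    exact ExtHamAux.hard_dir l hl
  · rintro ⟨l', hl'⟩
    exact ExtHamAux.easy_dir l' hl'
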